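/- Let T = (T₁, r₁) ∘ (T₂, r₂) with root r = r₁. If f is an IR2DF on T with f(r) = 1, then f|_{T₁} is an IR2DF on T₁ with value 1 at r₁, f(r₂) = 0, and either f|_{T₂} is an IR2DF of T₂, or f|_{T₂} is not an IR2DF of T₂ but f(N_{T₂}[r₂]) = 1 and f restricted to T₂ − r₂ is an IR2DF of T₂ − r₂. -/
import Mathlib

open scoped Classical

open Finset

noncomputable def nbrSum {V : Type*} [Fintype V] (G : SimpleGraph V) (f : V → ℕ) (v : V) : ℕ :=
  ∑ u ∈ Finset.univ.filter (fun u => G.Adj v u), f u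

/-- `f(N[v])`: sum of `f` over the closed neighborhood of `v`. -/
noncomputable def closedNbrSum {V : Type*} [Fintype V] (G : SimpleGraph V) (f : V → ℕ) (v : V) : ℕ :=
  f v + nbrSum G f v

def IsR2DF {V : Type*} [Fintype V] (G : SimpleGraph V) (f : V → ℕ) : Prop :=
  (∀ v, f v ≤ 2) ∧ ∀ v, f v = 0 → 2 ≤ nbrSum G f v

/-- `f` is an independent Roman {2}-dominating function on `G`. -/
def IsIR2DF {V : Type*} [Fintype V] (G : SimpleGraph V) (f : V → ℕ) : Prop :=
  IsR2DF G f ∧ ∀ ⦃u v : V⦄, G.Adj u v → f u = 0 ∨ f v = 0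

/-- One-directional relation generating the composition `(T₁,r₁) ∘ (T₂,r₂)`. -/
def treeCompRel {V₁ V₂ : Type*} (T₁ : SimpleGraph V₁) (T₂ : SimpleGraph V₂) (r₁ : V₁) (r₂ : V₂) :
    (V₁ ⊕ V₂) → (V₁ ⊕ V₂) → Prop
  | .inl a, .inl b => T₁.Adj a b
  | .inr a, .inr b => T₂.Adj a b
  | .inl a, .inr b => a = r₁ ∧ b = r₂
  | .inr _, .inl _ => False

/-- The composition `(T₁,r₁) ∘ (T₂,r₂)`: disjoint union plus the edge `r₁r₂`. -/
def compGraph {V₁ V₂ : Type*} (T₁ : SimpleGraph V₁) (T₂ : SimpleGraph V₂) (r₁ : V₁) (r₂ : V₂) :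
    SimpleGraph (V₁ ⊕ V₂) :=
  SimpleGraph.fromRel (treeCompRel T₁ T₂ r₁ r₂)

/-- The graph `G - r` obtained by deleting the vertex `r`. -/
def delVert {V : Type*} (G : SimpleGraph V) (r : V) : SimpleGraph {v : V // v ≠ r} :=
  SimpleGraph.induce {v : V | v ≠ r} G


section Aux
set_option linter.unusedSectionVars false

variable {V₁ V₂ : Type*} [Fintype V₁] [Fintype V₂] {T₁ : SimpleGraph V₁} {T₂ : SimpleGraph V₂}
  {r₁ : V₁} {r₂ : V₂}

lemma comp_adj_ll {a b : V₁} : (compGraph T₁ T₂ r₁ r₂).Adj (.inl a) (.inl b) ↔ T₁.Adj a b := by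
  simp only [compGraph, SimpleGraph.fromRel_adj, treeCompRel]
  constructor
  · rintro ⟨_, h | h⟩; exact h; exact h.symm
  · intro h; exact ⟨by simp [h.ne], Or.inl h⟩

lemma comp_adj_rr {a b : V₂} : (compGraph T₁ T₂ r₁ r₂).Adj (.inr a) (.inr b) ↔ T₂.Adj a b := by
  simp only [compGraph, SimpleGraph.fromRel_adj, treeCompRel]
  constructor
  · rintro ⟨_, h | h⟩; exact h; exact h.symm
  · intro h; exact ⟨by simp [h.ne], Or.inl h⟩

lemma comp_adj_lr {a : V₁} {b : V₂} :
    (compGraph T₁ T₂ r₁ r₂).Adj (.inl a) (.inr b) ↔ a = r₁ ∧ b = r₂ := by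
  simp [compGraph, SimpleGraph.fromRel_adj, treeCompRel]

lemma nbrSum_eq_ite {V : Type*} [Fintype V] (G : SimpleGraph V) (f : V → ℕ) (v : V) :
    nbrSum G f v = ∑ u, if G.Adj v u then f u else 0 := by
  rw [nbrSum, Finset.sum_filter]

lemma nbrSum_inl (f : V₁ ⊕ V₂ → ℕ) (v : V₁) :
    nbrSum (compGraph T₁ T₂ r₁ r₂) f (.inl v) =
      nbrSum T₁ (fun u => f (.inl u)) v + (if v = r₁ then f (.inr r₂) else 0) := by
  rw [nbrSum_eq_ite, nbrSum_eq_ite, Fintype.sum_sum_type]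
  congr 1
  · exact Finset.sum_congr rfl fun u _ => by rw [comp_adj_ll]
  · simp only [comp_adj_lr]
    by_cases h : v = r₁ <;> simp [h]

lemma nbrSum_inr (f : V₁ ⊕ V₂ → ℕ) (v : V₂) :
    nbrSum (compGraph T₁ T₂ r₁ r₂) f (.inr v) =
      (if v = r₂ then f (.inl r₁) else 0) + nbrSum T₂ (fun u => f (.inr u)) v := by
  rw [nbrSum_eq_ite, nbrSum_eq_ite, Fintype.sum_sum_type]
  congr 1
  · have : ∀ a : V₁, (compGraph T₁ T₂ r₁ r₂).Adj (.inr v) (.inl a) ↔ a = r₁ ∧ v = r₂ := by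
      intro a
      rw [SimpleGraph.adj_comm, comp_adj_lr]
    simp only [this]
    by_cases h : v = r₂ <;> simp [h]
  · exact Finset.sum_congr rfl fun u _ => by rw [comp_adj_rr]

lemma delVert_adj {V : Type*} {G : SimpleGraph V} {r : V} {a b : {v : V // v ≠ r}} :
    (delVert G r).Adj a b ↔ G.Adj a.1 b.1 := Iff.rfl

lemma nbrSum_delVert {V : Type*} [Fintype V] [DecidableEq V] (G : SimpleGraph V) (r : V)
    (g : V → ℕ) (hg : g r = 0) (v : {x : V // x ≠ r}) :
    nbrSum (delVert G r) (fun u => g u.1) v = nbrSum G g v.1 := by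
  rw [nbrSum_eq_ite, nbrSum_eq_ite]
  have h1 : ∑ u : V, (if G.Adj v.1 u then g u else 0)
      = ∑ u ∈ Finset.univ.erase r, (if G.Adj v.1 u then g u else 0) := by
    rw [← Finset.sum_erase_add _ _ (Finset.mem_univ r)]
    simp [hg]
  rw [h1]
  simp only [delVert_adj]
  exact (Finset.sum_subtype _ (fun x => by simp) (fun x => if G.Adj v.1 x then g x else 0)).symm

end Aux

theorem stmt_7 {V₁ V₂ : Type*} [Fintype V₁] [Fintype V₂] [DecidableEq V₁] [DecidableEq V₂]
    (T₁ : SimpleGraph V₁) (T₂ : SimpleGraph V₂) (hT₁ : T₁.IsTree) (hT₂ : T₂.IsTree)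
    (r₁ : V₁) (r₂ : V₂)
    (f : V₁ ⊕ V₂ → ℕ) (hf : IsIR2DF (compGraph T₁ T₂ r₁ r₂) f)
    (h1 : f (Sum.inl r₁) = 1) :
    IsIR2DF T₁ (fun v => f (Sum.inl v)) ∧ (fun v => f (Sum.inl v)) r₁ = 1 ∧
      f (Sum.inr r₂) = 0 ∧
      (IsIR2DF T₂ (fun v => f (Sum.inr v)) ∨
        (¬ IsIR2DF T₂ (fun v => f (Sum.inr v)) ∧
          closedNbrSum T₂ (fun v => f (Sum.inr v)) r₂ = 1 ∧
          IsIR2DF (delVert T₂ r₂) (fun v => f (Sum.inr v.1)))) := by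

  obtain ⟨⟨hle, hdom⟩, hind⟩ := hf
  have hadj : (compGraph T₁ T₂ r₁ r₂).Adj (.inl r₁) (.inr r₂) := comp_adj_lr.mpr ⟨rfl, rfl⟩
  have hr2 : f (Sum.inr r₂) = 0 := by
    rcases hind hadj with h | h
    · omega
    · exact h
  have hT1 : IsIR2DF T₁ (fun v => f (Sum.inl v)) := by
    refine ⟨⟨fun v => hle _, fun v h0 => ?_⟩, fun u v huv => hind (comp_adj_ll.mpr huv)⟩
    have h0' : f (Sum.inl v) = 0 := h0
    have hv : v ≠ r₁ := by intro h; rw [h] at h0'; omega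
    have := hdom (.inl v) h0
    rw [nbrSum_inl] at this
    simpa [hv] using this
  refine ⟨hT1, h1, hr2, ?_⟩
  by_cases hcase : 2 ≤ nbrSum T₂ (fun u => f (Sum.inr u)) r₂
  · left
    refine ⟨⟨fun v => hle _, fun v h0 => ?_⟩, fun u v huv => hind (comp_adj_rr.mpr huv)⟩
    by_cases hv : v = r₂
    · rw [hv]; exact hcase
    · have := hdom (.inr v) h0
      rw [nbrSum_inr] at this
      simpa [hv] using this
  · right
    have h2 := hdom (.inr r₂) hr2
    rw [nbrSum_inr] at h2
    rw [if_pos rfl, h1] at h2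
    have hn : nbrSum T₂ (fun u => f (Sum.inr u)) r₂ = 1 := by omega
    refine ⟨?_, ?_, ?_⟩
    · intro ⟨⟨_, hd⟩, _⟩
      have := hd r₂ hr2
      omega
    · rw [closedNbrSum, hr2, hn]
    · refine ⟨⟨fun v => hle _, fun v h0 => ?_⟩, fun u v huv => hind (comp_adj_rr.mpr huv)⟩
      have hdel : nbrSum (delVert T₂ r₂) (fun v : {x : V₂ // x ≠ r₂} => f (Sum.inr v.1)) v
          = nbrSum T₂ (fun u => f (Sum.inr u)) v.1 := nbrSum_delVert T₂ r₂ (fun u => f (Sum.inr u)) hr2 v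
      rw [hdel]
      have := hdom (.inr v.1) h0
      rw [nbrSum_inr] at this
      simpa [v.2] using this
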